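/- For every real t with −1 < t < 1, the series Σ_{k=1}^{∞} (2k choose k) · t^k/(4^k · k) converges and its sum equals −2·ln((1 + √(1 − t))/2). -/

import Mathlib

open Real

/-- Normalized central binomial coefficient `C(2k,k)/4^k`. -/
noncomputable def cb (k : ℕ) : ℝ := (Nat.choose (2 * k) k : ℝ) / 4 ^ k

lemma cb_nonneg (k : ℕ) : 0 ≤ cb k := by
  unfold cb; positivity

lemma cb_zero : cb 0 = 1 := by norm_num [cb]

lemma cb_one : cb 1 = 1 / 2 := by norm_num [cb]

lemma cb_rec (k : ℕ) : 2 * ((k : ℝ) + 1) * cb (k + 1) = (2 * (k : ℝ) + 1) * cb k := by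
  have h := Nat.succ_mul_centralBinom_succ k
  rw [Nat.centralBinom_eq_two_mul_choose, Nat.centralBinom_eq_two_mul_choose] at h
  have h' : ((k : ℝ) + 1) * (Nat.choose (2 * (k + 1)) (k + 1) : ℝ)
      = 2 * (2 * (k : ℝ) + 1) * (Nat.choose (2 * k) k : ℝ) := by exact_mod_cast h
  unfold cb
  have h4 : (4 : ℝ) ^ (k + 1) = 4 * 4 ^ k := by ring
  have h4k : (4 : ℝ) ^ k ≠ 0 := by positivity
  rw [h4]
  field_simp
  linear_combination 2 * h'

lemma cb_le_one (k : ℕ) : cb k ≤ 1 := by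
  induction k with
  | zero => simp [cb_zero]
  | succ n ih =>
    have hr := cb_rec n
    have hn : (0 : ℝ) ≤ (n : ℝ) := Nat.cast_nonneg n
    nlinarith [cb_nonneg n, cb_nonneg (n + 1)]

section Series

noncomputable def Fs (x : ℝ) : ℝ := ∑' k : ℕ, cb (k + 1) * x ^ (k + 1)
noncomputable def Es (x : ℝ) : ℝ := ∑' k : ℕ, ((k : ℝ) + 1) * cb (k + 1) * x ^ k
noncomputable def Ds (x : ℝ) : ℝ := ∑' k : ℕ, cb (k + 1) * x ^ k
noncomputable def Ss (x : ℝ) : ℝ := ∑' k : ℕ, cb (k + 1) * x ^ (k + 1) / ((k : ℝ) + 1)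

lemma aux_summable {x : ℝ} (hx : |x| < 1) :
    Summable (fun k : ℕ => 2 * ((k : ℝ) + 2) * |x| ^ k) := by
  have h1 : Summable (fun k : ℕ => (k : ℝ) ^ 1 * |x| ^ k) :=
    summable_pow_mul_geometric_of_norm_lt_one 1 (by rwa [Real.norm_eq_abs, abs_abs])
  have h2 : Summable (fun k : ℕ => |x| ^ k) :=
    summable_geometric_of_lt_one (abs_nonneg x) hx
  exact ((h1.mul_left 2).add (h2.mul_left 4)).congr (fun k => by ring)

lemma bound_pow {x : ℝ} (hx : |x| < 1) (k : ℕ) : |x| ^ (k + 1) ≤ |x| ^ k := by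
  rw [pow_succ]
  nlinarith [pow_nonneg (abs_nonneg x) k, abs_nonneg x]

lemma summable_F {x : ℝ} (hx : |x| < 1) :
    Summable (fun k : ℕ => cb (k + 1) * x ^ (k + 1)) := by
  refine Summable.of_norm_bounded (aux_summable hx) (fun k => ?_)
  rw [Real.norm_eq_abs, abs_mul, abs_pow, abs_of_nonneg (cb_nonneg _)]
  have h1 := bound_pow hx k
  have h2 := pow_nonneg (abs_nonneg x) (k + 1)
  have h3 := pow_nonneg (abs_nonneg x) k
  have h4 := cb_le_one (k + 1)
  have h5 := cb_nonneg (k + 1)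
  have hk : (0 : ℝ) ≤ (k : ℝ) := Nat.cast_nonneg k
  nlinarith [mul_le_of_le_one_left h2 h4, mul_nonneg hk h3]

lemma summable_S {x : ℝ} (hx : |x| < 1) :
    Summable (fun k : ℕ => cb (k + 1) * x ^ (k + 1) / ((k : ℝ) + 1)) := by
  refine Summable.of_norm_bounded (aux_summable hx) (fun k => ?_)
  have hk1 : (0 : ℝ) < (k : ℝ) + 1 := by positivity
  rw [Real.norm_eq_abs, abs_div, abs_mul, abs_pow, abs_of_nonneg (cb_nonneg _),
    abs_of_pos hk1]
  have h1 := bound_pow hx k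
  have h3 := pow_nonneg (abs_nonneg x) k
  have h2 := pow_nonneg (abs_nonneg x) (k + 1)
  have h4 := cb_le_one (k + 1)
  have h5 := cb_nonneg (k + 1)
  have hk : (0 : ℝ) ≤ (k : ℝ) := Nat.cast_nonneg k
  rw [div_le_iff₀ hk1]
  nlinarith [mul_le_of_le_one_left h2 h4, mul_nonneg hk h3, mul_nonneg (mul_nonneg hk hk) h3]

lemma summable_D {x : ℝ} (hx : |x| < 1) :
    Summable (fun k : ℕ => cb (k + 1) * x ^ k) := by
  refine Summable.of_norm_bounded (aux_summable hx) (fun k => ?_)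
  rw [Real.norm_eq_abs, abs_mul, abs_pow, abs_of_nonneg (cb_nonneg _)]
  have h3 := pow_nonneg (abs_nonneg x) k
  have h4 := cb_le_one (k + 1)
  have h5 := cb_nonneg (k + 1)
  have hk : (0 : ℝ) ≤ (k : ℝ) := Nat.cast_nonneg k
  nlinarith [mul_le_of_le_one_left h3 h4, mul_nonneg hk h3]

lemma summable_E {x : ℝ} (hx : |x| < 1) :
    Summable (fun k : ℕ => ((k : ℝ) + 1) * cb (k + 1) * x ^ k) := by
  refine Summable.of_norm_bounded (aux_summable hx) (fun k => ?_)
  have hk1 : (0 : ℝ) < (k : ℝ) + 1 := by positivity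
  rw [Real.norm_eq_abs, abs_mul, abs_mul, abs_pow, abs_of_nonneg (cb_nonneg _),
    abs_of_pos hk1]
  have h3 := pow_nonneg (abs_nonneg x) k
  have h4 := cb_le_one (k + 1)
  have h5 := cb_nonneg (k + 1)
  have hk : (0 : ℝ) ≤ (k : ℝ) := Nat.cast_nonneg k
  nlinarith [mul_le_of_le_one_right hk1.le h4, mul_le_mul_of_nonneg_right
    (mul_le_of_le_one_right hk1.le h4) h3, mul_nonneg hk h3]

lemma summable_A {x : ℝ} (hx : |x| < 1) :
    Summable (fun k : ℕ => 2 * (k : ℝ) * cb k * x ^ k) := by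
  refine Summable.of_norm_bounded (aux_summable hx) (fun k => ?_)
  have hk : (0 : ℝ) ≤ (k : ℝ) := Nat.cast_nonneg k
  rw [Real.norm_eq_abs, abs_mul, abs_mul, abs_mul, abs_pow, abs_of_nonneg (cb_nonneg _)]
  have h3 := pow_nonneg (abs_nonneg x) k
  have h4 := cb_le_one k
  have h5 := cb_nonneg k
  norm_num
  nlinarith [mul_le_mul_of_nonneg_right (mul_le_of_le_one_right hk h4) h3, mul_nonneg hk h3]

/-- The key coefficient identity: `2(1-x) Es x = 1 + Fs x`. -/
lemma key_identity {x : ℝ} (hx : |x| < 1) : 2 * (1 - x) * Es x = 1 + Fs x := by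
  have hE : HasSum (fun k : ℕ => ((k : ℝ) + 1) * cb (k + 1) * x ^ k) (Es x) :=
    (summable_E hx).hasSum
  have hF : HasSum (fun k : ℕ => cb (k + 1) * x ^ (k + 1)) (Fs x) :=
    (summable_F hx).hasSum
  have hC : HasSum (fun k : ℕ => cb k * x ^ k) (Fs x + 1) := by
    have := (hasSum_nat_add_iff (f := fun k : ℕ => cb k * x ^ k) 1).1 hF
    simpa [cb_zero] using this
  have hA : HasSum (fun k : ℕ => 2 * (k : ℝ) * cb k * x ^ k)
      (∑' k : ℕ, 2 * (k : ℝ) * cb k * x ^ k) := (summable_A hx).hasSum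
  set A := ∑' k : ℕ, 2 * (k : ℝ) * cb k * x ^ k with hAdef
  have hA' : HasSum (fun k : ℕ => 2 * ((k : ℕ) + 1 : ℕ) * cb (k + 1) * x ^ (k + 1)) A := by
    refine (hasSum_nat_add_iff (f := fun k : ℕ => 2 * (k : ℝ) * cb k * x ^ k) 1).2 ?_
    simpa using hA
  have hA'' : HasSum (fun k : ℕ => 2 * ((k : ℝ) + 1) * cb (k + 1) * x ^ (k + 1)) A := by
    have heq : (fun k : ℕ => 2 * ((k : ℕ) + 1 : ℕ) * cb (k + 1) * x ^ (k + 1))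
        = fun k : ℕ => 2 * ((k : ℝ) + 1) * cb (k + 1) * x ^ (k + 1) := by
      funext k; push_cast; ring
    rwa [heq] at hA'
  have h1 := hA.add hC
  have h2 := h1.sub hA''
  have h3 := hE.mul_left (2 * (1 - x))
  have heq : (fun k : ℕ => 2 * (1 - x) * (((k : ℝ) + 1) * cb (k + 1) * x ^ k))
      = fun k : ℕ => (2 * (k : ℝ) * cb k * x ^ k + cb k * x ^ k)
        - 2 * ((k : ℝ) + 1) * cb (k + 1) * x ^ (k + 1) := by
    funext k
    have hr := cb_rec k
    have hp : x ^ (k + 1) = x ^ k * x := pow_succ x k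
    rw [hp]
    linear_combination x ^ k * hr
  rw [heq] at h3
  have := h3.unique h2
  linarith

/-- A function with zero derivative on `Ioo (-1) 1` is constant there. -/
lemma const_on_Ioo {f : ℝ → ℝ}
    (h : ∀ y ∈ Set.Ioo (-1 : ℝ) 1, HasDerivAt f 0 y)
    {x : ℝ} (hx : x ∈ Set.Ioo (-1 : ℝ) 1) : f x = f 0 := by
  have h0 : (0 : ℝ) ∈ Set.Ioo (-1 : ℝ) 1 := by norm_num
  refine Convex.is_const_of_fderivWithin_eq_zero (𝕜 := ℝ) (convex_Ioo (-1 : ℝ) 1) ?_ ?_ hx h0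
  · intro y hy
    exact (h y hy).differentiableAt.differentiableWithinAt
  · intro y hy
    have hf : HasFDerivAt f (0 : ℝ →L[ℝ] ℝ) y := by
      have h2 := (h y hy).hasFDerivAt
      have h3 : ContinuousLinearMap.toSpanSingleton ℝ (0 : ℝ) = 0 := by
        ext; simp
      rwa [h3] at h2
    exact hf.hasFDerivWithinAt.fderivWithin (isOpen_Ioo.uniqueDiffWithinAt hy)

lemma hasDerivAt_sqrt_one_sub {y : ℝ} (hy : y < 1) :
    HasDerivAt (fun z : ℝ => Real.sqrt (1 - z)) (1 / (2 * Real.sqrt (1 - y)) * (-1)) y := by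
  have h1 : (0 : ℝ) < 1 - y := by linarith
  have hinner : HasDerivAt (fun z : ℝ => 1 - z) (-1) y := by
    simpa using (hasDerivAt_id y).const_sub 1
  exact (Real.hasDerivAt_sqrt h1.ne').comp y hinner

lemma hasDerivAt_Fs {x : ℝ} (hx : |x| < 1) : HasDerivAt Fs (Es x) x := by
  set r : ℝ := (1 + |x|) / 2 with hrdef
  have hr0 : 0 ≤ r := by positivity
  have hr1 : r < 1 := by simp only [hrdef]; linarith
  have hxr : |x| < r := by simp only [hrdef]; linarith [abs_nonneg x]
  have hmem : x ∈ Set.Ioo (-r) r := by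
    rw [Set.mem_Ioo, ← abs_lt]; exact hxr
  have h0mem : (0 : ℝ) ∈ Set.Ioo (-r) r := by
    constructor <;> [linarith [abs_nonneg x]; linarith [abs_nonneg x]]
  have hu : Summable (fun k : ℕ => ((k : ℝ) + 1) * r ^ k) := by
    have h1 : Summable (fun k : ℕ => (k : ℝ) ^ 1 * r ^ k) :=
      summable_pow_mul_geometric_of_norm_lt_one 1
        (by rwa [Real.norm_eq_abs, abs_of_nonneg hr0])
    have h2 : Summable (fun k : ℕ => r ^ k) := summable_geometric_of_lt_one hr0 hr1
    exact (h1.add h2).congr (fun k => by ring)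
  have key := hasDerivAt_tsum_of_isPreconnected
    (u := fun k : ℕ => ((k : ℝ) + 1) * r ^ k)
    (g := fun (k : ℕ) (y : ℝ) => cb (k + 1) * y ^ (k + 1))
    (g' := fun (k : ℕ) (y : ℝ) => ((k : ℝ) + 1) * cb (k + 1) * y ^ k)
    hu isOpen_Ioo (convex_Ioo _ _).isPreconnected
    (fun n y _ => by
      have := (hasDerivAt_pow (n + 1) y).const_mul (cb (n + 1))
      convert this using 1
      · rfl
      push_cast
      ring)
    (fun n y hy => by
      have hyr : |y| < r := abs_lt.2 ⟨hy.1, hy.2⟩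
      have h1 : |y| ^ n ≤ r ^ n := pow_le_pow_left₀ (abs_nonneg y) hyr.le n
      have h4 := cb_le_one (n + 1)
      have h5 := cb_nonneg (n + 1)
      have hn1 : (0 : ℝ) < (n : ℝ) + 1 := by positivity
      rw [Real.norm_eq_abs, abs_mul, abs_mul, abs_pow, abs_of_nonneg (cb_nonneg _),
        abs_of_pos hn1]
      have h3 := pow_nonneg (abs_nonneg y) n
      have hrn := pow_nonneg hr0 n
      nlinarith [mul_le_mul_of_nonneg_right (mul_le_of_le_one_right hn1.le h4) h3,
        mul_le_mul_of_nonneg_left h1 hn1.le])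
    h0mem
    (by
      refine Summable.congr (summable_zero) (fun k => ?_)
      simp [zero_pow])
    hmem
  exact key

lemma hasDerivAt_Ss {x : ℝ} (hx : |x| < 1) : HasDerivAt Ss (Ds x) x := by
  set r : ℝ := (1 + |x|) / 2 with hrdef
  have hr0 : 0 ≤ r := by positivity
  have hr1 : r < 1 := by simp only [hrdef]; linarith
  have hxr : |x| < r := by simp only [hrdef]; linarith [abs_nonneg x]
  have hmem : x ∈ Set.Ioo (-r) r := by
    rw [Set.mem_Ioo, ← abs_lt]; exact hxr
  have h0mem : (0 : ℝ) ∈ Set.Ioo (-r) r := by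
    constructor <;> [linarith [abs_nonneg x]; linarith [abs_nonneg x]]
  have hu : Summable (fun k : ℕ => r ^ k) := summable_geometric_of_lt_one hr0 hr1
  have key := hasDerivAt_tsum_of_isPreconnected
    (u := fun k : ℕ => r ^ k)
    (g := fun (k : ℕ) (y : ℝ) => cb (k + 1) * y ^ (k + 1) / ((k : ℝ) + 1))
    (g' := fun (k : ℕ) (y : ℝ) => cb (k + 1) * y ^ k)
    hu isOpen_Ioo (convex_Ioo _ _).isPreconnected
    (fun n y _ => by
      have hn1 : ((n : ℝ) + 1) ≠ 0 := by positivity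
      have := ((hasDerivAt_pow (n + 1) y).const_mul (cb (n + 1))).div_const ((n : ℝ) + 1)
      convert this using 1
      · rfl
      push_cast
      field_simp)
    (fun n y hy => by
      have hyr : |y| < r := abs_lt.2 ⟨hy.1, hy.2⟩
      have h1 : |y| ^ n ≤ r ^ n := pow_le_pow_left₀ (abs_nonneg y) hyr.le n
      have h4 := cb_le_one (n + 1)
      have h5 := cb_nonneg (n + 1)
      rw [Real.norm_eq_abs, abs_mul, abs_pow, abs_of_nonneg (cb_nonneg _)]
      have h3 := pow_nonneg (abs_nonneg y) n
      nlinarith [mul_le_of_le_one_left h3 h4])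
    h0mem
    (by
      refine Summable.congr (summable_zero) (fun k => ?_)
      simp [zero_pow])
    hmem
  exact key

lemma Fs_zero : Fs 0 = 0 := by
  unfold Fs
  have : (fun k : ℕ => cb (k + 1) * (0 : ℝ) ^ (k + 1)) = fun _ => 0 := by
    funext k; simp [zero_pow]
  rw [this, tsum_zero]

lemma Ss_zero : Ss 0 = 0 := by
  unfold Ss
  have : (fun k : ℕ => cb (k + 1) * (0 : ℝ) ^ (k + 1) / ((k : ℝ) + 1)) = fun _ => 0 := by
    funext k; simp [zero_pow]
  rw [this, tsum_zero]

lemma sqrt_identity {x : ℝ} (hx1 : -1 < x) (hx2 : x < 1) :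
    Real.sqrt (1 - x) * (1 + Fs x) = 1 := by
  have hmem : x ∈ Set.Ioo (-1 : ℝ) 1 := ⟨hx1, hx2⟩
  have hconst : ∀ y ∈ Set.Ioo (-1 : ℝ) 1,
      HasDerivAt (fun z => Real.sqrt (1 - z) * (1 + Fs z)) 0 y := by
    intro y hy
    obtain ⟨hy1, hy2⟩ := hy
    have habs : |y| < 1 := abs_lt.2 ⟨hy1, hy2⟩
    have h1y : (0 : ℝ) < 1 - y := by linarith
    set s := Real.sqrt (1 - y) with hsdef
    have hs : 0 < s := Real.sqrt_pos.2 h1y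
    have hss : s ^ 2 = 1 - y := Real.sq_sqrt h1y.le
    have hsq := hasDerivAt_sqrt_one_sub hy2
    have hFd : HasDerivAt (fun z => 1 + Fs z) (Es y) y := (hasDerivAt_Fs habs).const_add 1
    have hG := hsq.mul hFd
    have hval : 1 / (2 * s) * (-1) * (1 + Fs y) + s * Es y = 0 := by
      rw [← key_identity habs]
      have h1ys : 1 - y = s ^ 2 := hss.symm
      rw [h1ys]
      field_simp
      ring
    rw [hval] at hG
    exact hG
  have := const_on_Ioo hconst hmem
  rw [this]
  simp [Fs_zero]

lemma one_add_Fs {x : ℝ} (hx1 : -1 < x) (hx2 : x < 1) :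
    1 + Fs x = (Real.sqrt (1 - x))⁻¹ := by
  have h1x : (0 : ℝ) < 1 - x := by linarith
  have hs : 0 < Real.sqrt (1 - x) := Real.sqrt_pos.2 h1x
  have := sqrt_identity hx1 hx2
  field_simp
  linarith [this]

lemma Ds_eq {x : ℝ} (hx1 : -1 < x) (hx2 : x < 1) :
    Ds x = (Real.sqrt (1 - x) * (1 + Real.sqrt (1 - x)))⁻¹ := by
  have habs : |x| < 1 := abs_lt.2 ⟨hx1, hx2⟩
  have h1x : (0 : ℝ) < 1 - x := by linarith
  set s := Real.sqrt (1 - x) with hsdef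
  have hs : 0 < s := Real.sqrt_pos.2 h1x
  have hss : s ^ 2 = 1 - x := Real.sq_sqrt h1x.le
  have h1s : (0 : ℝ) < 1 + s := by linarith
  by_cases hx0 : x = 0
  · subst hx0
    have hDs : Ds 0 = cb 1 := by
      unfold Ds
      rw [tsum_eq_single 0 (fun k hk => by
        have : k ≠ 0 := hk
        simp [zero_pow this])]
      simp
    rw [hDs, cb_one]
    have : s = 1 := by rw [hsdef]; simp
    rw [this]
    norm_num
  · have hxF : x * Ds x = Fs x := by
      have h1 := (summable_D habs).hasSum.mul_left x
      have h2 := (summable_F habs).hasSum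
      have heq : (fun k : ℕ => x * (cb (k + 1) * x ^ k))
          = fun k : ℕ => cb (k + 1) * x ^ (k + 1) := by
        funext k; rw [pow_succ]; ring
      rw [heq] at h1
      exact h1.unique h2
    have hFval : Fs x = s⁻¹ - 1 := by
      have := one_add_Fs hx1 hx2
      linarith
    have hxs : x = (1 - s) * (1 + s) := by nlinarith
    have hs1 : 1 - s ≠ 0 := by
      intro h
      apply hx0
      rw [hxs, h, zero_mul]
    have hprod : (s⁻¹ - 1) * (s * (1 + s)) = x := by
      field_simp
      nlinarith [hss]
    have hkey : x * (Ds x * (s * (1 + s))) = x * 1 := by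
      calc x * (Ds x * (s * (1 + s))) = x * Ds x * (s * (1 + s)) := by ring
        _ = (s⁻¹ - 1) * (s * (1 + s)) := by rw [hxF, hFval]
        _ = x := hprod
        _ = x * 1 := by ring
    have hone : Ds x * (s * (1 + s)) = 1 := mul_left_cancel₀ hx0 hkey
    exact eq_inv_of_mul_eq_one_left hone

lemma hasDerivAt_glog {x : ℝ} (hx1 : -1 < x) (hx2 : x < 1) :
    HasDerivAt (fun y => -2 * Real.log ((1 + Real.sqrt (1 - y)) / 2)) (Ds x) x := by
  have h1x : (0 : ℝ) < 1 - x := by linarith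
  set s := Real.sqrt (1 - x) with hsdef
  have hs : 0 < s := Real.sqrt_pos.2 h1x
  have h1s : (0 : ℝ) < (1 + s) / 2 := by linarith
  have hsq := hasDerivAt_sqrt_one_sub hx2
  have hu : HasDerivAt (fun y => (1 + Real.sqrt (1 - y)) / 2)
      (1 / (2 * s) * (-1) / 2) x := (hsq.const_add 1).div_const 2
  have hlog := (Real.hasDerivAt_log h1s.ne').comp x hu
  have hfinal := hlog.const_mul (-2)
  have hval : -2 * (((1 + s) / 2)⁻¹ * (1 / (2 * s) * (-1) / 2))
      = (s * (1 + s))⁻¹ := by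
    have h2 : (1 : ℝ) + s ≠ 0 := by linarith
    field_simp
  rw [hval] at hfinal
  rw [Ds_eq hx1 hx2]
  exact hfinal

end Series

/-- For −1 < t < 1, Σ_{k≥1} (2k choose k) t^k/(4^k k) = −2 ln((1 + √(1−t))/2). -/
theorem central_binomial_log_series (t : ℝ) (h1 : -1 < t) (h2 : t < 1) :
    HasSum (fun k : ℕ =>
        (Nat.choose (2 * (k + 1)) (k + 1) : ℝ) * t ^ (k + 1) / (4 ^ (k + 1) * (k + 1)))
      (-2 * Real.log ((1 + Real.sqrt (1 - t)) / 2)) := by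
  have habs : |t| < 1 := abs_lt.2 ⟨h1, h2⟩
  -- Step 1: Ss t = -2 log ((1 + sqrt (1-t))/2)
  have hmem : t ∈ Set.Ioo (-1 : ℝ) 1 := ⟨h1, h2⟩
  have hconst : ∀ y ∈ Set.Ioo (-1 : ℝ) 1,
      HasDerivAt (fun z => Ss z - -2 * Real.log ((1 + Real.sqrt (1 - z)) / 2)) 0 y := by
    intro y hy
    obtain ⟨hy1, hy2⟩ := hy
    have habsy : |y| < 1 := abs_lt.2 ⟨hy1, hy2⟩
    have hD := (hasDerivAt_Ss habsy).sub (hasDerivAt_glog hy1 hy2)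
    rw [sub_self] at hD
    exact hD
  have hval := const_on_Ioo hconst hmem
  have hzero : Ss 0 - -2 * Real.log ((1 + Real.sqrt (1 - 0)) / 2) = 0 := by
    rw [Ss_zero]
    norm_num
  rw [hzero] at hval
  have hSt : Ss t = -2 * Real.log ((1 + Real.sqrt (1 - t)) / 2) := by linarith [hval]
  -- Step 2: summability and function identification
  have hsum : HasSum (fun k : ℕ => cb (k + 1) * t ^ (k + 1) / ((k : ℝ) + 1)) (Ss t) :=
    (summable_S habs).hasSum
  rw [hSt] at hsum
  have heq : (fun k : ℕ =>
      (Nat.choose (2 * (k + 1)) (k + 1) : ℝ) * t ^ (k + 1) / (4 ^ (k + 1) * (k + 1)))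
      = fun k : ℕ => cb (k + 1) * t ^ (k + 1) / ((k : ℝ) + 1) := by
    funext k
    unfold cb
    have h4 : (4 : ℝ) ^ (k + 1) ≠ 0 := by positivity
    have hk1 : ((k : ℝ) + 1) ≠ 0 := by positivity
    field_simp
  rw [heq]
  exact hsum
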